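/- arXiv:1509.00719 — 2 statements merged into one kernel-verified Lean document; each statement's English description precedes it below -/
import Mathlib

section
/- Let G be a topological group and let K₁/L₁ and K₂/L₂ be non-abelian chief factors of G. Then the following are equivalent: (1) K₁/L₁ is associated to K₂/L₂; (2) C_G(K₁/L₁) = C_G(K₂/L₂); (3) cl(K₁L₂) = cl(K₂L₁) and cl(L₁L₂) is strictly contained in cl(K₁K₂), where cl denotes the topological closure of the subgroup generated. -/
/-- Normal factors `K₁/L₁` and `K₂/L₂` of a topological group `G` are associated if
`cl(K₁L₂) = cl(K₂L₁)`, `K₁ ∩ cl(L₁L₂) = L₁` and `K₂ ∩ cl(L₁L₂) = L₂`, where `cl` denotes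
the topological closure of the subgroup generated. -/
def AssociatedFactors {G : Type*} [Group G] [TopologicalSpace G] [IsTopologicalGroup G]
    (K₁ L₁ K₂ L₂ : Subgroup G) : Prop :=
  (K₁ ⊔ L₂).topologicalClosure = (K₂ ⊔ L₁).topologicalClosure ∧
    K₁ ⊓ (L₁ ⊔ L₂).topologicalClosure = L₁ ∧
    K₂ ⊓ (L₁ ⊔ L₂).topologicalClosure = L₂

/-- The centralizer of a normal factor `K/L` of `G`. -/
def FactorCentralizer {G : Type*} [Group G] (K L : Subgroup G) : Set G :=
  {g : G | ∀ k ∈ K, g * k * g⁻¹ * k⁻¹ ∈ L}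

/-- `K/L` is a chief factor of `G`: `K`, `L` are closed normal subgroups, `L < K`, and no
closed normal subgroup of `G` lies strictly between `L` and `K`. -/
def IsChiefFactor {G : Type*} [Group G] [TopologicalSpace G]
    (K L : Subgroup G) : Prop :=
  IsClosed (K : Set G) ∧ IsClosed (L : Set G) ∧ K.Normal ∧ L.Normal ∧ L < K ∧
    ∀ M : Subgroup G, M.Normal → IsClosed (M : Set G) → L < M → M < K → False

section Aux

variable {G : Type*} [Group G] [TopologicalSpace G] [IsTopologicalGroup G]

/-- The factor centralizer as a subgroup. -/
def factCent (K L : Subgroup G) (hL : L.Normal) (hK : K.Normal) (hLK : L ≤ K) : Subgroup G where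
  carrier := {g : G | ∀ k ∈ K, g * k * g⁻¹ * k⁻¹ ∈ L}
  one_mem' := by intro k hk; simpa using L.one_mem
  mul_mem' := by
    intro g h hg hh k hk
    have hk' : h * k * h⁻¹ ∈ K := hK.conj_mem k hk h
    have h1 : g * (h * k * h⁻¹) * g⁻¹ * (h * k * h⁻¹)⁻¹ ∈ L := hg _ hk'
    have h2 : h * k * h⁻¹ * k⁻¹ ∈ L := hh k hk
    have e : (g * h) * k * (g * h)⁻¹ * k⁻¹ =
        (g * (h * k * h⁻¹) * g⁻¹ * (h * k * h⁻¹)⁻¹) * (h * k * h⁻¹ * k⁻¹) := by group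
    rw [e]; exact L.mul_mem h1 h2
  inv_mem' := by
    intro g hg k hk
    have hk' : g⁻¹ * k * g ∈ K := by
      have := hK.conj_mem k hk g⁻¹; simpa using this
    have h1 : g * (g⁻¹ * k * g) * g⁻¹ * (g⁻¹ * k * g)⁻¹ ∈ L := hg _ hk'
    have e : g⁻¹ * k * g⁻¹⁻¹ * k⁻¹ =
        (g * (g⁻¹ * k * g) * g⁻¹ * (g⁻¹ * k * g)⁻¹)⁻¹ := by group
    rw [e]
    exact L.inv_mem h1

lemma factCent_coe (K L : Subgroup G) (hL : L.Normal) (hK : K.Normal) (hLK : L ≤ K) :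
    (factCent K L hL hK hLK : Set G) = FactorCentralizer K L := rfl

lemma factCent_normal (K L : Subgroup G) (hL : L.Normal) (hK : K.Normal) (hLK : L ≤ K) :
    (factCent K L hL hK hLK).Normal := by
  constructor
  intro g hg h k hk
  have hk' : h⁻¹ * k * h ∈ K := by
    have := hK.conj_mem k hk h⁻¹; simpa using this
  have h1 : g * (h⁻¹ * k * h) * g⁻¹ * (h⁻¹ * k * h)⁻¹ ∈ L := hg _ hk'
  have e : (h * g * h⁻¹) * k * (h * g * h⁻¹)⁻¹ * k⁻¹ =
      h * (g * (h⁻¹ * k * h) * g⁻¹ * (h⁻¹ * k * h)⁻¹) * h⁻¹ := by group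
  rw [e]; exact hL.conj_mem _ h1 h

lemma isClosed_factCent (K L : Subgroup G) (hL : L.Normal) (hK : K.Normal) (hLK : L ≤ K)
    (hLc : IsClosed (L : Set G)) : IsClosed ((factCent K L hL hK hLK : Subgroup G) : Set G) := by
  have e : ((factCent K L hL hK hLK : Subgroup G) : Set G) =
      ⋂ k ∈ (K : Set G), (fun g => g * k * g⁻¹ * k⁻¹) ⁻¹' (L : Set G) := by
    ext g
    simp only [Set.mem_iInter, Set.mem_preimage, SetLike.mem_coe]
    rfl
  rw [e]
  exact isClosed_biInter fun k hk => hLc.preimage (by continuity)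

lemma le_factCent (K L : Subgroup G) (hL : L.Normal) (hK : K.Normal) (hLK : L ≤ K) :
    L ≤ factCent K L hL hK hLK := by
  intro l hl k hk
  have e : l * k * l⁻¹ * k⁻¹ = l * (k * l⁻¹ * k⁻¹) := by group
  show l * k * l⁻¹ * k⁻¹ ∈ L
  rw [e]
  exact L.mul_mem hl (hL.conj_mem _ (L.inv_mem hl) k)

/-- For fixed `g` and normal `M`, the set of `a` with `[g,a] ∈ M` is a subgroup. -/
def commFix (g : G) (M : Subgroup G) (hM : M.Normal) : Subgroup G where
  carrier := {a : G | g * a * g⁻¹ * a⁻¹ ∈ M}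
  one_mem' := by simpa using M.one_mem
  mul_mem' := by
    intro a b ha hb
    have e : g * (a * b) * g⁻¹ * (a * b)⁻¹ =
        (g * a * g⁻¹ * a⁻¹) * (a * (g * b * g⁻¹ * b⁻¹) * a⁻¹) := by group
    show g * (a * b) * g⁻¹ * (a * b)⁻¹ ∈ M
    rw [e]
    exact M.mul_mem ha (hM.conj_mem _ hb a)
  inv_mem' := by
    intro a ha
    have e : g * a⁻¹ * g⁻¹ * a⁻¹⁻¹ = a⁻¹ * (g * a * g⁻¹ * a⁻¹)⁻¹ * a⁻¹⁻¹ := by group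
    show g * a⁻¹ * g⁻¹ * a⁻¹⁻¹ ∈ M
    rw [e]
    exact hM.conj_mem _ (M.inv_mem ha) a⁻¹

lemma isClosed_commFix (g : G) (M : Subgroup G) (hM : M.Normal) (hMc : IsClosed (M : Set G)) :
    IsClosed ((commFix g M hM : Subgroup G) : Set G) := by
  have e : ((commFix g M hM : Subgroup G) : Set G) =
      (fun a => g * a * g⁻¹ * a⁻¹) ⁻¹' (M : Set G) := rfl
  rw [e]
  exact hMc.preimage (by continuity)

lemma chief_dichotomy {K L M : Subgroup G} (h : IsChiefFactor K L) (hM : M.Normal)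
    (hMc : IsClosed (M : Set G)) (h1 : L ≤ M) (h2 : M ≤ K) : M = L ∨ M = K := by
  by_contra hcon
  push_neg at hcon
  exact h.2.2.2.2.2 M hM hMc (h1.lt_of_ne (Ne.symm hcon.1)) (h2.lt_of_ne hcon.2)

/-- For a non-abelian chief factor, `K ⊓ C = L` for any closed normal `C` with
`L ≤ C` whose elements centralize `K` mod `L`. -/
lemma inf_cent_eq {K L : Subgroup G} (h : IsChiefFactor K L)
    (hna : ∃ a ∈ K, ∃ b ∈ K, a * b * a⁻¹ * b⁻¹ ∉ L) (C : Subgroup G) (hC : C.Normal)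
    (hCc : IsClosed (C : Set G))
    (hCmem : ∀ g ∈ C, ∀ k ∈ K, g * k * g⁻¹ * k⁻¹ ∈ L) (hLC : L ≤ C) :
    K ⊓ C = L := by
  obtain ⟨hKc, hLc, hKn, hLn, hLK, hch⟩ := h
  have hn : (K ⊓ C).Normal :=
    ⟨fun n hn g => ⟨hKn.conj_mem n hn.1 g, hC.conj_mem n hn.2 g⟩⟩
  have hc : IsClosed ((K ⊓ C : Subgroup G) : Set G) := by
    have : ((K ⊓ C : Subgroup G) : Set G) = (K : Set G) ∩ (C : Set G) := rfl
    rw [this]; exact hKc.inter hCc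
  rcases chief_dichotomy ⟨hKc, hLc, hKn, hLn, hLK, hch⟩ hn hc
      (le_inf hLK.le hLC) inf_le_left with he | he
  · exact he
  · exfalso
    obtain ⟨a, ha, b, hb, hab⟩ := hna
    have haC : a ∈ C := (he.symm.le.trans inf_le_right) ha
    exact hab (hCmem a haC b hb)

end Aux

/-- Let `G` be a topological group and let `K₁/L₁` and `K₂/L₂` be non-abelian
chief factors of `G`. Then the following are equivalent:
(1) `K₁/L₁` is associated to `K₂/L₂`;
(2) `C_G(K₁/L₁) = C_G(K₂/L₂)`;
(3) `cl(K₁L₂) = cl(K₂L₁)` and `cl(L₁L₂)` is strictly contained in `cl(K₁K₂)`. -/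
theorem stmt_18 {G : Type*} [Group G] [TopologicalSpace G] [IsTopologicalGroup G]
    (K₁ L₁ K₂ L₂ : Subgroup G)
    (hchief₁ : IsChiefFactor K₁ L₁) (hchief₂ : IsChiefFactor K₂ L₂)
    (hna₁ : ∃ a ∈ K₁, ∃ b ∈ K₁, a * b * a⁻¹ * b⁻¹ ∉ L₁)
    (hna₂ : ∃ a ∈ K₂, ∃ b ∈ K₂, a * b * a⁻¹ * b⁻¹ ∉ L₂) :
    (AssociatedFactors K₁ L₁ K₂ L₂ ↔ FactorCentralizer K₁ L₁ = FactorCentralizer K₂ L₂) ∧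
      (AssociatedFactors K₁ L₁ K₂ L₂ ↔
        ((K₁ ⊔ L₂).topologicalClosure = (K₂ ⊔ L₁).topologicalClosure ∧
          (L₁ ⊔ L₂).topologicalClosure < (K₁ ⊔ K₂).topologicalClosure)) := by
  obtain ⟨hK₁c, hL₁c, hK₁n, hL₁n, hLK₁, hch₁⟩ := id hchief₁
  obtain ⟨hK₂c, hL₂c, hK₂n, hL₂n, hLK₂, hch₂⟩ := id hchief₂
  haveI := hK₁n; haveI := hK₂n; haveI := hL₁n; haveI := hL₂n
  set M : Subgroup G := (L₁ ⊔ L₂).topologicalClosure with hMdef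
  have hMn : M.Normal := Subgroup.is_normal_topologicalClosure _
  have hMc : IsClosed (M : Set G) := Subgroup.isClosed_topologicalClosure _
  have hL₁M : L₁ ≤ M := le_sup_left.trans (Subgroup.le_topologicalClosure _)
  have hL₂M : L₂ ≤ M := le_sup_right.trans (Subgroup.le_topologicalClosure _)
  set C₁ : Subgroup G := factCent K₁ L₁ hL₁n hK₁n hLK₁.le with hC₁def
  set C₂ : Subgroup G := factCent K₂ L₂ hL₂n hK₂n hLK₂.le with hC₂def
  -- commutator membership helpers
  have comm_mem : ∀ (K : Subgroup G), K.Normal → ∀ g k, k ∈ K → g * k * g⁻¹ * k⁻¹ ∈ K := by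
    intro K hK g k hk
    exact K.mul_mem (hK.conj_mem k hk g) (K.inv_mem hk)
  have comm_mem' : ∀ (K : Subgroup G), K.Normal → ∀ g k, g ∈ K → g * k * g⁻¹ * k⁻¹ ∈ K := by
    intro K hK g k hg
    have e : g * k * g⁻¹ * k⁻¹ = g * (k * g⁻¹ * k⁻¹) := by group
    rw [e]
    exact K.mul_mem hg (hK.conj_mem _ (K.inv_mem hg) k)
  -- (1) → (2)
  have h12 : AssociatedFactors K₁ L₁ K₂ L₂ →
      FactorCentralizer K₁ L₁ = FactorCentralizer K₂ L₂ := by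
    rintro ⟨hA, h1, h2⟩
    set A : Subgroup G := (K₁ ⊔ L₂).topologicalClosure with hAdef
    have key : ∀ (K L L' : Subgroup G), K.Normal → L'.Normal → K ⊓ M = L → L' ≤ M →
        (K ⊔ L').topologicalClosure = A →
        FactorCentralizer K L = {g : G | ∀ a ∈ A, g * a * g⁻¹ * a⁻¹ ∈ M} := by
      intro K L L' hKn' hL'n hKM hL'M hsup
      ext g
      constructor
      · intro hg a ha
        have hsub : K ⊔ L' ≤ commFix g M hMn := by
          refine sup_le ?_ ?_
          · intro k hk
            show g * k * g⁻¹ * k⁻¹ ∈ M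
            have : g * k * g⁻¹ * k⁻¹ ∈ L := hg k hk
            exact (hKM ▸ this : _ ∈ K ⊓ M).2
          · intro l hl
            show g * l * g⁻¹ * l⁻¹ ∈ M
            exact hL'M (L'.mul_mem (hL'n.conj_mem l hl g) (L'.inv_mem hl))
        have := Subgroup.topologicalClosure_minimal _ hsub (isClosed_commFix g M hMn hMc)
        rw [hsup] at this
        exact this ha
      · intro hg k hk
        have hkA : k ∈ A := by
          rw [← hsup]
          exact (le_sup_left.trans (Subgroup.le_topologicalClosure _)) hk
        have hm : g * k * g⁻¹ * k⁻¹ ∈ M := hg k hkA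
        have hkK : g * k * g⁻¹ * k⁻¹ ∈ K := comm_mem K hKn' g k hk
        have : g * k * g⁻¹ * k⁻¹ ∈ K ⊓ M := ⟨hkK, hm⟩
        rw [hKM] at this
        exact this
    have e1 := key K₁ L₁ L₂ hK₁n hL₂n h1 hL₂M rfl
    have e2 := key K₂ L₂ L₁ hK₂n hL₁n h2 hL₁M hA.symm
    rw [e1, e2]
  -- (2) → (1)
  have h21 : FactorCentralizer K₁ L₁ = FactorCentralizer K₂ L₂ →
      AssociatedFactors K₁ L₁ K₂ L₂ := by
    intro hC
    have hCeq : C₁ = C₂ := SetLike.ext' (by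
      rw [factCent_coe, factCent_coe]; exact hC)
    have hC₁n : C₁.Normal := factCent_normal _ _ _ _ _
    have hC₁c : IsClosed (C₁ : Set G) := isClosed_factCent _ _ _ _ _ hL₁c
    have hKC₁ : K₁ ⊓ C₁ = L₁ :=
      inf_cent_eq hchief₁ hna₁ C₁ hC₁n hC₁c (fun g hg => hg) (le_factCent _ _ _ _ _)
    have hKC₂ : K₂ ⊓ C₁ = L₂ := by
      rw [hCeq]
      exact inf_cent_eq hchief₂ hna₂ C₂ (hCeq ▸ hC₁n) (hCeq ▸ hC₁c)
        (fun g hg => hg) (le_factCent _ _ _ _ _)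
    have hMC : M ≤ C₁ := by
      refine Subgroup.topologicalClosure_minimal _ (sup_le (le_factCent _ _ _ _ _) ?_) hC₁c
      rw [hCeq]
      exact le_factCent _ _ _ _ _
    have h1 : K₁ ⊓ M = L₁ :=
      le_antisymm (hKC₁ ▸ inf_le_inf_left K₁ hMC) (le_inf hLK₁.le hL₁M)
    have h2 : K₂ ⊓ M = L₂ :=
      le_antisymm (hKC₂ ▸ inf_le_inf_left K₂ hMC) (le_inf hLK₂.le hL₂M)
    refine ⟨?_, h1, h2⟩
    set N : Subgroup G := (K₁ ⊔ L₂).topologicalClosure with hNdef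
    set N' : Subgroup G := (K₂ ⊔ L₁).topologicalClosure with hN'def
    haveI : (K₁ ⊔ L₂).Normal := Subgroup.sup_normal _ _
    haveI : (K₂ ⊔ L₁).Normal := Subgroup.sup_normal _ _
    have hNn : N.Normal := Subgroup.is_normal_topologicalClosure _
    have hN'n : N'.Normal := Subgroup.is_normal_topologicalClosure _
    have hNc : IsClosed (N : Set G) := Subgroup.isClosed_topologicalClosure _
    have hN'c : IsClosed (N' : Set G) := Subgroup.isClosed_topologicalClosure _
    have hK₁N : K₁ ≤ N := le_sup_left.trans (Subgroup.le_topologicalClosure _)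
    have hL₂N : L₂ ≤ N := le_sup_right.trans (Subgroup.le_topologicalClosure _)
    have hK₂N' : K₂ ≤ N' := le_sup_left.trans (Subgroup.le_topologicalClosure _)
    have hL₁N' : L₁ ≤ N' := le_sup_right.trans (Subgroup.le_topologicalClosure _)
    -- K₂ ≤ N
    have hK₂N : K₂ ≤ N := by
      have hd : K₂ ⊓ N = L₂ ∨ K₂ ⊓ N = K₂ := by
        refine chief_dichotomy hchief₂
          ⟨fun n hn g => ⟨hK₂n.conj_mem n hn.1 g, hNn.conj_mem n hn.2 g⟩⟩
          ?_ (le_inf hLK₂.le hL₂N) inf_le_left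
        show IsClosed ((K₂ : Set G) ∩ (N : Set G))
        exact hK₂c.inter hNc
      rcases hd with hd | hd
      · exfalso
        have hK₂C : K₂ ≤ C₁ := by
          intro g hg k hk
          have hcK₁ : g * k * g⁻¹ * k⁻¹ ∈ K₁ := comm_mem K₁ hK₁n g k hk
          have hcK₂ : g * k * g⁻¹ * k⁻¹ ∈ K₂ := comm_mem' K₂ hK₂n g k hg
          have hcL₂ : g * k * g⁻¹ * k⁻¹ ∈ L₂ := hd ▸ (⟨hcK₂, hK₁N hcK₁⟩ : _ ∈ K₂ ⊓ N)
          exact h1 ▸ (⟨hcK₁, hL₂M hcL₂⟩ : _ ∈ K₁ ⊓ M)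
        have : K₂ = L₂ := by
          rw [← hKC₂]
          exact le_antisymm (le_inf le_rfl hK₂C) inf_le_left
        exact hLK₂.ne' this
      · exact hd.symm.le.trans inf_le_right
    -- K₁ ≤ N'
    have hK₁N'' : K₁ ≤ N' := by
      have hd : K₁ ⊓ N' = L₁ ∨ K₁ ⊓ N' = K₁ := by
        refine chief_dichotomy hchief₁
          ⟨fun n hn g => ⟨hK₁n.conj_mem n hn.1 g, hN'n.conj_mem n hn.2 g⟩⟩
          ?_ (le_inf hLK₁.le hL₁N') inf_le_left
        show IsClosed ((K₁ : Set G) ∩ (N' : Set G))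
        exact hK₁c.inter hN'c
      rcases hd with hd | hd
      · exfalso
        have hK₁C : K₁ ≤ C₁ := by
          rw [hCeq]
          intro g hg k hk
          have hcK₂ : g * k * g⁻¹ * k⁻¹ ∈ K₂ := comm_mem K₂ hK₂n g k hk
          have hcK₁ : g * k * g⁻¹ * k⁻¹ ∈ K₁ := comm_mem' K₁ hK₁n g k hg
          have hcL₁ : g * k * g⁻¹ * k⁻¹ ∈ L₁ := hd ▸ (⟨hcK₁, hK₂N' hcK₂⟩ : _ ∈ K₁ ⊓ N')
          exact h2 ▸ (⟨hcK₂, hL₁M hcL₁⟩ : _ ∈ K₂ ⊓ M)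
        have : K₁ = L₁ := by
          rw [← hKC₁]
          exact le_antisymm (le_inf le_rfl hK₁C) inf_le_left
        exact hLK₁.ne' this
      · exact hd.symm.le.trans inf_le_right
    exact le_antisymm
      (Subgroup.topologicalClosure_minimal _ (sup_le hK₁N'' (hLK₂.le.trans hK₂N')) hN'c)
      (Subgroup.topologicalClosure_minimal _ (sup_le hK₂N (hLK₁.le.trans hK₁N)) hNc)
  -- (1) → (3)
  have h13 : AssociatedFactors K₁ L₁ K₂ L₂ →
      ((K₁ ⊔ L₂).topologicalClosure = (K₂ ⊔ L₁).topologicalClosure ∧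
        M < (K₁ ⊔ K₂).topologicalClosure) := by
    rintro ⟨hA, h1, h2⟩
    refine ⟨hA, lt_of_le_of_ne ?_ ?_⟩
    · exact Subgroup.topologicalClosure_minimal _
        ((sup_le_sup hLK₁.le hLK₂.le).trans (Subgroup.le_topologicalClosure _))
        (Subgroup.isClosed_topologicalClosure _)
    · intro heq
      have hK₁M : K₁ ≤ M := by
        rw [heq]
        exact le_sup_left.trans (Subgroup.le_topologicalClosure _)
      have : K₁ = L₁ := by rw [← h1, inf_eq_left.mpr hK₁M]
      exact hLK₁.ne' this
  -- (3) → (1)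
  have h31 : ((K₁ ⊔ L₂).topologicalClosure = (K₂ ⊔ L₁).topologicalClosure ∧
      M < (K₁ ⊔ K₂).topologicalClosure) → AssociatedFactors K₁ L₁ K₂ L₂ := by
    rintro ⟨hA, hlt⟩
    have hnotK₁ : ¬ K₁ ≤ M := by
      intro hK₁M
      have hAM : (K₁ ⊔ L₂).topologicalClosure ≤ M :=
        Subgroup.topologicalClosure_minimal _ (sup_le hK₁M hL₂M) hMc
      have hK₂M : K₂ ≤ M := by
        refine le_trans ?_ hAM
        rw [hA]
        exact le_sup_left.trans (Subgroup.le_topologicalClosure _)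
      exact hlt.not_ge
        (Subgroup.topologicalClosure_minimal _ (sup_le hK₁M hK₂M) hMc)
    have hnotK₂ : ¬ K₂ ≤ M := by
      intro hK₂M
      have hAM : (K₂ ⊔ L₁).topologicalClosure ≤ M :=
        Subgroup.topologicalClosure_minimal _ (sup_le hK₂M hL₁M) hMc
      have hK₁M : K₁ ≤ M := by
        refine le_trans ?_ hAM
        rw [← hA]
        exact le_sup_left.trans (Subgroup.le_topologicalClosure _)
      exact hlt.not_ge
        (Subgroup.topologicalClosure_minimal _ (sup_le hK₁M hK₂M) hMc)
    have hinfc : ∀ (K : Subgroup G), K.Normal → IsClosed (K : Set G) →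
        ((K ⊓ M : Subgroup G).Normal ∧ IsClosed ((K ⊓ M : Subgroup G) : Set G)) := by
      intro K hKn' hKc'
      refine ⟨⟨fun n hn g => ⟨hKn'.conj_mem n hn.1 g, hMn.conj_mem n hn.2 g⟩⟩, ?_⟩
      show IsClosed ((K : Set G) ∩ (M : Set G))
      exact hKc'.inter hMc
    have h1 : K₁ ⊓ M = L₁ := by
      rcases chief_dichotomy hchief₁ (hinfc K₁ hK₁n hK₁c).1 (hinfc K₁ hK₁n hK₁c).2
          (le_inf hLK₁.le hL₁M) inf_le_left with he | he
      · exact he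
      · exact absurd (he.symm.le.trans inf_le_right) hnotK₁
    have h2 : K₂ ⊓ M = L₂ := by
      rcases chief_dichotomy hchief₂ (hinfc K₂ hK₂n hK₂c).1 (hinfc K₂ hK₂n hK₂c).2
          (le_inf hLK₂.le hL₂M) inf_le_left with he | he
      · exact he
      · exact absurd (he.symm.le.trans inf_le_right) hnotK₂
    exact ⟨hA, h1, h2⟩
  exact ⟨⟨h12, h21⟩, ⟨h13, h31⟩⟩
end

section
/- Let G be a Polish group, let K/L be a non-abelian chief factor of G, and let {1} = G₀ ≤ G₁ ≤ … ≤ Gₙ = G be a finite increasing series of closed normal subgroups of G. Then there is exactly one index i ∈ {0,…,n−1} for which there exist closed normal subgroups A and B of G with G_i ≤ B ≤ A ≤ G_{i+1} such that A/B is a non-abelian chief factor of G associated to K/L. -/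
section Aux

variable {G : Type*} [Group G] [TopologicalSpace G] [IsTopologicalGroup G]

/-- Elements `y` with `x*y*x⁻¹*y⁻¹ ∈ W`, as a subgroup (for `W` normal). -/
def commLSub (x : G) (W : Subgroup G) (hWn : W.Normal) : Subgroup G where
  carrier := {y | x * y * x⁻¹ * y⁻¹ ∈ W}
  one_mem' := by simpa using W.one_mem
  mul_mem' := by
    intro a b ha hb
    show x * (a * b) * x⁻¹ * (a * b)⁻¹ ∈ W
    have h : x * (a * b) * x⁻¹ * (a * b)⁻¹
        = (x * a * x⁻¹ * a⁻¹) * (a * (x * b * x⁻¹ * b⁻¹) * a⁻¹) := by group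
    rw [h]
    exact mul_mem ha (hWn.conj_mem _ hb a)
  inv_mem' := by
    intro a ha
    show x * a⁻¹ * x⁻¹ * a⁻¹⁻¹ ∈ W
    have h : x * a⁻¹ * x⁻¹ * a⁻¹⁻¹ = a⁻¹ * (x * a * x⁻¹ * a⁻¹)⁻¹ * a⁻¹⁻¹ := by group
    rw [h]
    exact hWn.conj_mem _ (inv_mem ha) a⁻¹

lemma commLSub_isClosed (x : G) (W : Subgroup G) (hWn : W.Normal)
    (hWc : IsClosed (W : Set G)) : IsClosed ((commLSub x W hWn : Subgroup G) : Set G) := by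
  have h : ((commLSub x W hWn : Subgroup G) : Set G)
      = (fun y : G => x * y * x⁻¹ * y⁻¹) ⁻¹' (W : Set G) := rfl
  rw [h]
  exact hWc.preimage
    (((continuous_const.mul continuous_id).mul continuous_const).mul continuous_inv)

/-- Elements `a` with `a*y*a⁻¹*y⁻¹ ∈ W`, as a subgroup (for `W` normal). -/
def commRSub (y : G) (W : Subgroup G) (hWn : W.Normal) : Subgroup G where
  carrier := {a | a * y * a⁻¹ * y⁻¹ ∈ W}
  one_mem' := by simpa using W.one_mem
  mul_mem' := by
    intro a b ha hb
    show (a * b) * y * (a * b)⁻¹ * y⁻¹ ∈ W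
    have h : (a * b) * y * (a * b)⁻¹ * y⁻¹
        = (a * (b * y * b⁻¹ * y⁻¹) * a⁻¹) * (a * y * a⁻¹ * y⁻¹) := by group
    rw [h]
    exact mul_mem (hWn.conj_mem _ hb a) ha
  inv_mem' := by
    intro a ha
    show a⁻¹ * y * a⁻¹⁻¹ * y⁻¹ ∈ W
    have h : a⁻¹ * y * a⁻¹⁻¹ * y⁻¹ = a⁻¹ * (a * y * a⁻¹ * y⁻¹)⁻¹ * a⁻¹⁻¹ := by group
    rw [h]
    exact hWn.conj_mem _ (inv_mem ha) a⁻¹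

lemma commRSub_isClosed (y : G) (W : Subgroup G) (hWn : W.Normal)
    (hWc : IsClosed (W : Set G)) : IsClosed ((commRSub y W hWn : Subgroup G) : Set G) := by
  have h : ((commRSub y W hWn : Subgroup G) : Set G)
      = (fun a : G => a * y * a⁻¹ * y⁻¹) ⁻¹' (W : Set G) := rfl
  rw [h]
  exact hWc.preimage
    (((continuous_id.mul continuous_const).mul continuous_inv).mul continuous_const)

lemma comm_mem_left {H : Subgroup G} (hH : H.Normal) {x : G} (hx : x ∈ H) (y : G) :
    x * y * x⁻¹ * y⁻¹ ∈ H := by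
  have h : x * y * x⁻¹ * y⁻¹ = x * (y * x⁻¹ * y⁻¹) := by group
  rw [h]
  exact mul_mem hx (hH.conj_mem _ (inv_mem hx) y)

lemma comm_mem_right {H : Subgroup G} (hH : H.Normal) (x : G) {y : G} (hy : y ∈ H) :
    x * y * x⁻¹ * y⁻¹ ∈ H :=
  mul_mem (hH.conj_mem _ hy x) (inv_mem hy)

lemma comm_closure_left (W : Subgroup G) (hWn : W.Normal) (hWc : IsClosed (W : Set G))
    (x : G) (Y Z : Subgroup G)
    (hY : ∀ y ∈ Y, x * y * x⁻¹ * y⁻¹ ∈ W) (hZ : ∀ z ∈ Z, x * z * x⁻¹ * z⁻¹ ∈ W) :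
    ∀ w ∈ (Y ⊔ Z).topologicalClosure, x * w * x⁻¹ * w⁻¹ ∈ W := by
  have hle : (Y ⊔ Z).topologicalClosure ≤ commLSub x W hWn :=
    Subgroup.topologicalClosure_minimal _
      (sup_le (fun y hy => hY y hy) (fun z hz => hZ z hz)) (commLSub_isClosed x W hWn hWc)
  exact fun w hw => hle hw

lemma comm_closure_right (W : Subgroup G) (hWn : W.Normal) (hWc : IsClosed (W : Set G))
    (y : G) (X Z : Subgroup G)
    (hX : ∀ x ∈ X, x * y * x⁻¹ * y⁻¹ ∈ W) (hZ : ∀ z ∈ Z, z * y * z⁻¹ * y⁻¹ ∈ W) :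
    ∀ w ∈ (X ⊔ Z).topologicalClosure, w * y * w⁻¹ * y⁻¹ ∈ W := by
  have hle : (X ⊔ Z).topologicalClosure ≤ commRSub y W hWn :=
    Subgroup.topologicalClosure_minimal _
      (sup_le (fun x hx => hX x hx) (fun z hz => hZ z hz)) (commRSub_isClosed y W hWn hWc)
  exact fun w hw => hle hw

/-- The relative centralizer of `K/L` in `G`. -/
def relCent (K L : Subgroup G) (hLn : L.Normal) : Subgroup G where
  carrier := {x | ∀ k ∈ K, k * x * k⁻¹ * x⁻¹ ∈ L}
  one_mem' := fun k _ => by simpa using L.one_mem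
  mul_mem' := fun {a b} ha hb k hk => (commLSub k L hLn).mul_mem (ha k hk) (hb k hk)
  inv_mem' := fun {a} ha k hk => (commLSub k L hLn).inv_mem (ha k hk)

lemma mem_relCent {K L : Subgroup G} {hLn : L.Normal} {x : G} :
    x ∈ relCent K L hLn ↔ ∀ k ∈ K, k * x * k⁻¹ * x⁻¹ ∈ L := Iff.rfl

lemma relCent_isClosed (K L : Subgroup G) (hLn : L.Normal) (hLc : IsClosed (L : Set G)) :
    IsClosed ((relCent K L hLn : Subgroup G) : Set G) := by
  have h : ((relCent K L hLn : Subgroup G) : Set G)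
      = ⋂ k ∈ (K : Set G), (fun x : G => k * x * k⁻¹ * x⁻¹) ⁻¹' (L : Set G) := by
    ext x
    show (∀ k ∈ K, k * x * k⁻¹ * x⁻¹ ∈ L) ↔ _
    simp [Set.mem_iInter]
  rw [h]
  exact isClosed_biInter fun k _ => hLc.preimage
    (((continuous_const.mul continuous_id).mul continuous_const).mul continuous_inv)

lemma relCent_normal (K L : Subgroup G) (hKn : K.Normal) (hLn : L.Normal) :
    (relCent K L hLn).Normal := by
  refine ⟨fun x hx g => ?_⟩
  show ∀ k ∈ K, k * (g * x * g⁻¹) * k⁻¹ * (g * x * g⁻¹)⁻¹ ∈ L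
  intro k hk
  have h : k * (g * x * g⁻¹) * k⁻¹ * (g * x * g⁻¹)⁻¹
      = g * ((g⁻¹ * k * g) * x * (g⁻¹ * k * g)⁻¹ * x⁻¹) * g⁻¹ := by group
  rw [h]
  exact hLn.conj_mem _ (hx _ (by simpa using hKn.conj_mem k hk g⁻¹)) g

lemma quotCentral {K L C Q : Subgroup G} (hLn : L.Normal) (hCn : C.Normal)
    (hCc : IsClosed (C : Set G)) (hLC : L ≤ C)
    (hKle : K ≤ (Q ⊔ L).topologicalClosure)
    (hQ : ∀ x ∈ Q, ∀ y ∈ Q, x * y * x⁻¹ * y⁻¹ ∈ C) :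
    ∀ a ∈ K, ∀ b ∈ K, a * b * a⁻¹ * b⁻¹ ∈ C := by
  have step1 : ∀ q ∈ Q, ∀ w ∈ (Q ⊔ L).topologicalClosure, q * w * q⁻¹ * w⁻¹ ∈ C :=
    fun q hq => comm_closure_left C hCn hCc q Q L (hQ q hq)
      (fun z hz => hLC (comm_mem_right hLn q hz))
  have step2 : ∀ b ∈ K, ∀ w ∈ (Q ⊔ L).topologicalClosure, w * b * w⁻¹ * b⁻¹ ∈ C :=
    fun b hb => comm_closure_right C hCn hCc b Q L
      (fun q hq => step1 q hq b (hKle hb))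
      (fun z hz => hLC (comm_mem_left hLn hz b))
  exact fun a ha b hb => step2 b hb a (hKle ha)

end Aux

/-- Let `G` be a Polish group, let `K/L` be a non-abelian chief factor of `G`,
and let `{1} = G₀ ≤ G₁ ≤ … ≤ Gₙ = G` be a finite increasing series of closed normal
subgroups of `G`. Then there is exactly one index `i ∈ {0,…,n−1}` for which there exist
closed normal subgroups `A` and `B` of `G` with `Gᵢ ≤ B ≤ A ≤ Gᵢ₊₁` such that `A/B` is a
non-abelian chief factor of `G` associated to `K/L`. -/
theorem stmt_19 {G : Type*} [Group G] [TopologicalSpace G] [IsTopologicalGroup G]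
    [PolishSpace G]
    (K L : Subgroup G) (hchief : IsChiefFactor K L)
    (hna : ∃ a ∈ K, ∃ b ∈ K, a * b * a⁻¹ * b⁻¹ ∉ L)
    (n : ℕ) (Gs : Fin (n + 1) → Subgroup G) (hmono : Monotone Gs)
    (h0 : Gs 0 = ⊥) (hlast : Gs (Fin.last n) = ⊤)
    (hclosed : ∀ i, IsClosed ((Gs i : Subgroup G) : Set G))
    (hnormal : ∀ i, (Gs i).Normal) :
    ∃! i : Fin n, ∃ A B : Subgroup G,
      Gs i.castSucc ≤ B ∧ B ≤ A ∧ A ≤ Gs i.succ ∧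
      IsChiefFactor A B ∧
      (∃ a ∈ A, ∃ b ∈ A, a * b * a⁻¹ * b⁻¹ ∉ B) ∧
      AssociatedFactors A B K L := by
  classical
  obtain ⟨hKc, hLc, hKn, hLn, hLK, hmax⟩ := hchief
  haveI := hKn; haveI := hLn
  -- monotonicity of topological closure
  have clmono : ∀ {H H' : Subgroup G}, H ≤ H' →
      H.topologicalClosure ≤ H'.topologicalClosure := fun {H H'} h =>
    Subgroup.topologicalClosure_minimal _ (h.trans (Subgroup.le_topologicalClosure _))
      (Subgroup.isClosed_topologicalClosure _)
  -- chief dichotomy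
  have chief_eq : ∀ X : Subgroup G, X.Normal → IsClosed (X : Set G) → L ≤ X → X ≤ K →
      X = L ∨ X = K := by
    intro X hXn hXc hLX hXK
    by_contra h
    push_neg at h
    exact hmax X hXn hXc (lt_of_le_of_ne hLX (Ne.symm h.1)) (lt_of_le_of_ne hXK h.2)
  -- the relative centralizer
  set C : Subgroup G := relCent K L hLn with hCdef
  have hCc : IsClosed (C : Set G) := relCent_isClosed K L hLn hLc
  have hCn : C.Normal := relCent_normal K L hKn hLn
  haveI := hCn
  have hLC : L ≤ C := fun x hx k hk => comm_mem_right hLn k hx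
  have hKC : K ⊓ C = L := by
    have hcl : IsClosed ((K ⊓ C : Subgroup G) : Set G) := by
      rw [Subgroup.coe_inf]; exact hKc.inter hCc
    rcases chief_eq (K ⊓ C) inferInstance hcl (le_inf hLK.le hLC) inf_le_left with h | h
    · exact h
    · exfalso
      obtain ⟨a, ha, b, hb, hab⟩ := hna
      have hbC : b ∈ C := by
        have : b ∈ K ⊓ C := by rw [h]; exact hb
        exact this.2
      exact hab (hbC a ha)
  -- the covering dichotomy
  have dich : ∀ H : Subgroup G, H.Normal →
      K ⊓ (H ⊔ L).topologicalClosure = L ∨ K ≤ (H ⊔ L).topologicalClosure := by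
    intro H hHn
    haveI := hHn
    haveI : ((H ⊔ L).topologicalClosure).Normal := Subgroup.is_normal_topologicalClosure _
    have hXc : IsClosed ((K ⊓ (H ⊔ L).topologicalClosure : Subgroup G) : Set G) := by
      rw [Subgroup.coe_inf]
      exact hKc.inter (Subgroup.isClosed_topologicalClosure _)
    rcases chief_eq (K ⊓ (H ⊔ L).topologicalClosure) inferInstance hXc
        (le_inf hLK.le (le_sup_right.trans (Subgroup.le_topologicalClosure _)))
        inf_le_left with h | h
    · exact Or.inl h
    · right; rw [← h]; exact inf_le_right
  -- not covering implies centralizing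
  have notcov_le : ∀ N0 : Subgroup G, N0.Normal →
      ¬ K ≤ (N0 ⊔ L).topologicalClosure → N0 ≤ C := by
    intro N0 hN0n hncov
    have h := (dich N0 hN0n).resolve_right hncov
    intro x hx
    show ∀ k ∈ K, k * x * k⁻¹ * x⁻¹ ∈ L
    intro k hk
    have hm : k * x * k⁻¹ * x⁻¹ ∈ K ⊓ (N0 ⊔ L).topologicalClosure :=
      Subgroup.mem_inf.mpr ⟨comm_mem_left hKn hk x,
        (le_sup_left.trans (Subgroup.le_topologicalClosure _)) (comm_mem_right hN0n k hx)⟩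
    rwa [h] at hm
  -- locating the index
  have hpn : ∀ m : ℕ, min m n < n + 1 := fun m => by omega
  have covTop : K ≤ ((⊤ : Subgroup G) ⊔ L).topologicalClosure :=
    le_top.trans (le_sup_left.trans (Subgroup.le_topologicalClosure _))
  have covBotFalse : ¬ K ≤ ((⊥ : Subgroup G) ⊔ L).topologicalClosure := by
    intro h
    have hcl : ((⊥ : Subgroup G) ⊔ L).topologicalClosure ≤ L := by
      rw [bot_sup_eq]
      exact Subgroup.topologicalClosure_minimal _ le_rfl hLc
    exact hLK.not_ge (h.trans hcl)
  set p : ℕ → Prop := fun m => K ≤ ((Gs ⟨min m n, hpn m⟩) ⊔ L).topologicalClosure with hp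
  have hpe : p n := by
    have he : (⟨min n n, hpn n⟩ : Fin (n + 1)) = Fin.last n := by
      apply Fin.ext; simp [Fin.last]
    show K ≤ _
    rw [he, hlast]
    exact covTop
  have hnotp0 : ¬ p 0 := by
    have he : (⟨min 0 n, hpn 0⟩ : Fin (n + 1)) = 0 := by
      apply Fin.ext; simp
    show ¬ K ≤ _
    rw [he, h0]
    exact covBotFalse
  have hex : ∃ m, p m := ⟨n, hpe⟩
  have hm0spec : p (Nat.find hex) := Nat.find_spec hex
  have hm0le : Nat.find hex ≤ n := Nat.find_le hpe
  have hm0pos : 0 < Nat.find hex := by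
    rcases Nat.eq_zero_or_pos (Nat.find hex) with h | h
    · exact absurd (h ▸ hm0spec) hnotp0
    · exact h
  have hn0 : 0 < n := lt_of_lt_of_le hm0pos hm0le
  set m0 := Nat.find hex with hm0def
  set i : Fin n := ⟨m0 - 1, by omega⟩ with hidef
  have hisucc : (i.succ : Fin (n + 1)) = ⟨min m0 n, hpn m0⟩ := by
    apply Fin.ext
    simp [hidef]
    omega
  have hicast : (i.castSucc : Fin (n + 1)) = ⟨min (m0 - 1) n, hpn (m0 - 1)⟩ := by
    apply Fin.ext
    simp [hidef]
    omega
  have hcovN : K ≤ ((Gs i.succ) ⊔ L).topologicalClosure := by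
    rw [hisucc]; exact hm0spec
  have hncovN0 : ¬ K ≤ ((Gs i.castSucc) ⊔ L).topologicalClosure := by
    rw [hicast]
    exact Nat.find_min hex (show m0 - 1 < m0 by omega)
  -- the construction
  set N : Subgroup G := Gs i.succ with hNdef
  have hNn : N.Normal := hnormal i.succ
  have hNc : IsClosed (N : Set G) := hclosed i.succ
  haveI := hNn
  set P : Subgroup G := K ⊓ N with hPdef
  haveI hPn : P.Normal := inferInstance
  set B : Subgroup G := N ⊓ C with hBdef
  haveI hBn : B.Normal := inferInstance
  have hBc : IsClosed (B : Set G) := by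
    rw [hBdef, Subgroup.coe_inf]; exact hNc.inter hCc
  set A : Subgroup G := ((⁅P, P⁆ : Subgroup G) ⊔ B).topologicalClosure with hAdef
  haveI hAn : A.Normal := Subgroup.is_normal_topologicalClosure _
  have hAc : IsClosed (A : Set G) := Subgroup.isClosed_topologicalClosure _
  have hPPP : (⁅P, P⁆ : Subgroup G) ≤ P := by
    refine Subgroup.commutator_le.mpr fun g₁ h₁ g₂ h₂ => ?_
    rw [commutatorElement_def]
    exact mul_mem (mul_mem (mul_mem h₁ h₂) (inv_mem h₁)) (inv_mem h₂)
  have hBA : B ≤ A := le_sup_right.trans (Subgroup.le_topologicalClosure _)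
  have hPPA : (⁅P, P⁆ : Subgroup G) ≤ A := le_sup_left.trans (Subgroup.le_topologicalClosure _)
  have hAN : A ≤ N :=
    Subgroup.topologicalClosure_minimal _
      (sup_le (hPPP.trans inf_le_right) inf_le_left) hNc
  have hGiB : Gs i.castSucc ≤ B :=
    le_inf (hmono (Fin.castSucc_lt_succ (i := i)).le) (notcov_le _ (hnormal i.castSucc) hncovN0)
  have hclBLC : (B ⊔ L).topologicalClosure ≤ C :=
    Subgroup.topologicalClosure_minimal _ (sup_le inf_le_right hLC) hCc
  -- key step: K ≤ cl(P ⊔ L)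
  have hKleE : K ≤ (P ⊔ L).topologicalClosure := by
    have hPleE : P ≤ (P ⊔ L).topologicalClosure :=
      le_sup_left.trans (Subgroup.le_topologicalClosure _)
    have hLleE : L ≤ (P ⊔ L).topologicalClosure :=
      le_sup_right.trans (Subgroup.le_topologicalClosure _)
    haveI : ((P ⊔ L).topologicalClosure).Normal := Subgroup.is_normal_topologicalClosure _
    have hcommKE : ∀ a ∈ K, ∀ b ∈ K,
        a * b * a⁻¹ * b⁻¹ ∈ (P ⊔ L).topologicalClosure := by
      intro a ha b hb
      refine comm_closure_left _ inferInstance (Subgroup.isClosed_topologicalClosure _)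
        a N L ?_ ?_ b (hcovN hb)
      · intro y hy
        exact hPleE (Subgroup.mem_inf.mpr
          ⟨comm_mem_left hKn ha y, comm_mem_right hNn a hy⟩)
      · intro z hz
        exact hLleE (comm_mem_right hLn a hz)
    rcases dich P hPn with h | h
    · exfalso
      obtain ⟨a, ha, b, hb, hab⟩ := hna
      apply hab
      have hm : a * b * a⁻¹ * b⁻¹ ∈ K ⊓ (P ⊔ L).topologicalClosure :=
        Subgroup.mem_inf.mpr ⟨comm_mem_left hKn ha b, hcommKE a ha b hb⟩
      rwa [h] at hm
    · exact h
  -- ⁅P,P⁆ is not centralizing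
  have hPPnotC : ¬ (⁅P, P⁆ : Subgroup G) ≤ C := by
    intro hle
    obtain ⟨a, ha, b, hb, hab⟩ := hna
    apply hab
    have hQ : ∀ x ∈ P, ∀ y ∈ P, x * y * x⁻¹ * y⁻¹ ∈ C := by
      intro x hx y hy
      have h := hle (Subgroup.commutator_mem_commutator hx hy)
      rwa [commutatorElement_def] at h
    have hm : a * b * a⁻¹ * b⁻¹ ∈ K ⊓ C :=
      Subgroup.mem_inf.mpr ⟨comm_mem_left hKn ha b,
        quotCentral hLn hCn hCc hLC hKleE hQ a ha b hb⟩
    rwa [hKC] at hm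
  -- K ≤ cl(⁅P,P⁆ ⊔ L)
  have hKleF : K ≤ ((⁅P, P⁆ : Subgroup G) ⊔ L).topologicalClosure := by
    obtain ⟨g, hg, hgC⟩ := SetLike.not_le_iff_exists.mp hPPnotC
    rcases dich ⁅P, P⁆ inferInstance with h | h
    · exfalso
      have hm : g ∈ K ⊓ ((⁅P, P⁆ : Subgroup G) ⊔ L).topologicalClosure :=
        Subgroup.mem_inf.mpr ⟨(hPPP.trans inf_le_left) hg,
          (le_sup_left.trans (Subgroup.le_topologicalClosure _)) hg⟩
      rw [h] at hm
      exact hgC (hLC hm)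
    · exact h
  have hKA : K ≤ (A ⊔ L).topologicalClosure :=
    hKleF.trans (clmono (sup_le_sup_right hPPA L))
  -- A/B is non-abelian
  have hnabAB : ∃ a ∈ A, ∃ b ∈ A, a * b * a⁻¹ * b⁻¹ ∉ B := by
    by_contra hcon
    push_neg at hcon
    obtain ⟨a, ha, b, hb, hab⟩ := hna
    apply hab
    have hm : a * b * a⁻¹ * b⁻¹ ∈ K ⊓ C :=
      Subgroup.mem_inf.mpr ⟨comm_mem_left hKn ha b,
        quotCentral hLn hCn hCc hLC hKA
          (fun x hx y hy => (inf_le_right : B ≤ C) (hcon x hx y hy)) a ha b hb⟩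
    rwa [hKC] at hm
  have hBALt : B < A := by
    refine lt_of_le_of_ne hBA ?_
    intro h
    obtain ⟨a, ha, b, hb, hab⟩ := hnabAB
    rw [← h] at ha hb
    exact hab (mul_mem (mul_mem (mul_mem ha hb) (inv_mem ha)) (inv_mem hb))
  -- A/B is a chief factor
  have hchiefAB : ∀ M : Subgroup G, M.Normal → IsClosed (M : Set G) → B < M → M < A → False := by
    intro M hMn hMc hBM hMA
    rcases dich M hMn with h | h
    · have hMC : M ≤ C := by
        intro x hx
        show ∀ k ∈ K, k * x * k⁻¹ * x⁻¹ ∈ L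
        intro k hk
        have hm : k * x * k⁻¹ * x⁻¹ ∈ K ⊓ (M ⊔ L).topologicalClosure :=
          Subgroup.mem_inf.mpr ⟨comm_mem_left hKn hk x,
            (le_sup_left.trans (Subgroup.le_topologicalClosure _)) (comm_mem_right hMn k hx)⟩
        rwa [h] at hm
      exact hBM.not_ge (le_inf (hMA.le.trans hAN) hMC)
    · have hPPM : (⁅P, P⁆ : Subgroup G) ≤ M := by
        refine Subgroup.commutator_le.mpr fun q₁ h₁ q₂ h₂ => ?_
        rw [commutatorElement_def]
        refine comm_closure_left M hMn hMc q₁ M L ?_ ?_ q₂ (h (Subgroup.mem_inf.mp h₂).1)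
        · exact fun m hm => comm_mem_right hMn q₁ hm
        · intro l hl
          refine hBM.le (Subgroup.mem_inf.mpr ⟨?_, ?_⟩)
          · exact comm_mem_left hNn (Subgroup.mem_inf.mp h₁).2 l
          · exact hLC (comm_mem_right hLn q₁ hl)
      exact hMA.not_ge
        (Subgroup.topologicalClosure_minimal _ (sup_le hPPM hBM.le) hMc)
  -- association
  have hassoc : AssociatedFactors A B K L := by
    refine ⟨?_, ?_, ?_⟩
    · apply le_antisymm
      · refine Subgroup.topologicalClosure_minimal _ (sup_le ?_ ?_)
          (Subgroup.isClosed_topologicalClosure _)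
        · refine Subgroup.topologicalClosure_minimal _ (sup_le ?_ ?_)
            (Subgroup.isClosed_topologicalClosure _)
          · exact (hPPP.trans inf_le_left).trans
              (le_sup_left.trans (Subgroup.le_topologicalClosure _))
          · exact le_sup_right.trans (Subgroup.le_topologicalClosure _)
        · exact hLK.le.trans (le_sup_left.trans (Subgroup.le_topologicalClosure _))
      · refine Subgroup.topologicalClosure_minimal _ (sup_le ?_ ?_)
          (Subgroup.isClosed_topologicalClosure _)
        · exact hKA
        · exact (hBA.trans le_sup_left).trans (Subgroup.le_topologicalClosure _)
    · apply le_antisymm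
      · intro x hx
        obtain ⟨hxA, hxcl⟩ := Subgroup.mem_inf.mp hx
        exact Subgroup.mem_inf.mpr ⟨hAN hxA, hclBLC hxcl⟩
      · exact le_inf hBA (le_sup_left.trans (Subgroup.le_topologicalClosure _))
    · apply le_antisymm
      · intro x hx
        obtain ⟨hxK, hxcl⟩ := Subgroup.mem_inf.mp hx
        have hm : x ∈ K ⊓ C := Subgroup.mem_inf.mpr ⟨hxK, hclBLC hxcl⟩
        rwa [hKC] at hm
      · exact le_inf hLK.le (le_sup_right.trans (Subgroup.le_topologicalClosure _))
  -- conclusion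
  refine ⟨i, ⟨A, B, hGiB, hBA, hAN, ⟨hAc, hBc, hAn, hBn, hBALt, hchiefAB⟩, hnabAB, hassoc⟩, ?_⟩
  intro j hj
  obtain ⟨A', B', hGjB', hB'A', hA'j, hchief', hnab', ha', hb', hc'⟩ := hj
  have hcovj : K ≤ ((Gs j.succ) ⊔ L).topologicalClosure := by
    have h1 : K ≤ (A' ⊔ L).topologicalClosure := by
      rw [ha']
      exact le_sup_left.trans (Subgroup.le_topologicalClosure _)
    exact h1.trans (clmono (sup_le_sup_right hA'j L))
  have hncovj : ¬ K ≤ ((Gs j.castSucc) ⊔ L).topologicalClosure := by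
    intro hcv
    have h2 : K ≤ L := by
      rw [← hc']
      exact le_inf le_rfl (hcv.trans (clmono (sup_le_sup_right hGjB' L)))
    exact hLK.not_ge h2
  by_contra hne
  rcases lt_or_gt_of_ne hne with hlt | hlt
  · have hv : (j : ℕ) < (i : ℕ) := hlt
    have hle : j.succ ≤ i.castSucc := by
      rw [Fin.le_def]
      show (j : ℕ) + 1 ≤ (i : ℕ)
      omega
    exact hncovN0 (hcovj.trans (clmono (sup_le_sup_right (hmono hle) L)))
  · have hv : (i : ℕ) < (j : ℕ) := hlt
    have hle : i.succ ≤ j.castSucc := by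
      rw [Fin.le_def]
      show (i : ℕ) + 1 ≤ (j : ℕ)
      omega
    exact hncovj (hcovN.trans (clmono (sup_le_sup_right (hmono hle) L)))
end
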